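/- Let X*ℋ be a Borel Hilbert bundle over an analytic Borel space X, let H̄ = X⋊H be a transformation groupoid acting freely on X with Hausdorff orbit space, and let U be a Borel homomorphism of the groupoid E into Iso(X*ℋ). Then there exists a Borel section e of X*ℋ such that e(x) is a unit vector whenever ℋ(x) ≠ 0, and e(x·η) = U*_{(r(x),x,η)} e(x) for all (x,η) ∈ H̄. -/

import Mathlib

open MeasureTheory Filter Topology

/-- Algebraic data of a groupoid: arrows, objects (units), range, source,
unit inclusion, (total extensions of) composition and inversion. -/
structure GroupoidData (Arr : Type) (Obj : Type) where
  r : Arr → Obj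
  s : Arr → Obj
  unit : Obj → Arr
  comp : Arr → Arr → Arr
  inv : Arr → Arr

/-- The axioms making `GroupoidData` an honest groupoid (composition is only
required to behave on composable pairs). -/
structure GroupoidData.IsGroupoid {Arr Obj : Type} (D : GroupoidData Arr Obj) : Prop where
  r_unit : ∀ u, D.r (D.unit u) = u
  s_unit : ∀ u, D.s (D.unit u) = u
  r_comp : ∀ a b, D.s a = D.r b → D.r (D.comp a b) = D.r a
  s_comp : ∀ a b, D.s a = D.r b → D.s (D.comp a b) = D.s b
  comp_assoc : ∀ a b c, D.s a = D.r b → D.s b = D.r c →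
    D.comp (D.comp a b) c = D.comp a (D.comp b c)
  unit_comp : ∀ a, D.comp (D.unit (D.r a)) a = a
  comp_unit : ∀ a, D.comp a (D.unit (D.s a)) = a
  r_inv : ∀ a, D.r (D.inv a) = D.s a
  s_inv : ∀ a, D.s (D.inv a) = D.r a
  inv_comp : ∀ a, D.comp (D.inv a) a = D.unit (D.s a)
  comp_inv : ∀ a, D.comp a (D.inv a) = D.unit (D.r a)

/-- A left action of the groupoid `G` on a set `X` with moment map `rX`;
`lact γ x` is only meaningful when `G.s γ = rX x`. -/
structure IsLeftActionOf {ArrG ObjG X : Type} (G : GroupoidData ArrG ObjG)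
    (rX : X → ObjG) (lact : ArrG → X → X) : Prop where
  moment : ∀ γ x, G.s γ = rX x → rX (lact γ x) = G.r γ
  unit_act : ∀ x, lact (G.unit (rX x)) x = x
  comp_act : ∀ γ ξ x, G.s γ = G.r ξ → G.s ξ = rX x →
    lact (G.comp γ ξ) x = lact γ (lact ξ x)

/-- A right action of the groupoid `H` on a set `X` with moment map `sX`;
`ract x η` is only meaningful when `sX x = H.r η`. -/
structure IsRightActionOf {ArrH ObjH X : Type} (H : GroupoidData ArrH ObjH)
    (sX : X → ObjH) (ract : X → ArrH → X) : Prop where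
  moment : ∀ x η, sX x = H.r η → sX (ract x η) = H.s η
  unit_act : ∀ x, ract x (H.unit (sX x)) = x
  comp_act : ∀ x η ζ, sX x = H.r η → H.s η = H.r ζ →
    ract x (H.comp η ζ) = ract (ract x η) ζ

/-- The algebraic part of `X` being a `(G,H)`-equivalence: commuting free
left `G`- and right `H`-actions, each moment map invariant under the other
action, whose fibres are exactly the orbits of the other action, and both
moment maps surjective. -/
structure IsEquivalenceData {ArrG ObjG ArrH ObjH X : Type}
    (G : GroupoidData ArrG ObjG) (H : GroupoidData ArrH ObjH)
    (rX : X → ObjG) (sX : X → ObjH)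
    (lact : ArrG → X → X) (ract : X → ArrH → X) : Prop where
  left_action : IsLeftActionOf G rX lact
  right_action : IsRightActionOf H sX ract
  commute : ∀ γ x η, G.s γ = rX x → sX x = H.r η →
    ract (lact γ x) η = lact γ (ract x η)
  rX_ract : ∀ x η, sX x = H.r η → rX (ract x η) = rX x
  sX_lact : ∀ γ x, G.s γ = rX x → sX (lact γ x) = sX x
  free_left : ∀ γ x, G.s γ = rX x → lact γ x = x → γ = G.unit (rX x)
  free_right : ∀ x η, sX x = H.r η → ract x η = x → η = H.unit (sX x)
  rX_fibres : ∀ x y, rX x = rX y ↔ ∃ η, sX x = H.r η ∧ ract x η = y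
  sX_fibres : ∀ x y, sX x = sX y ↔ ∃ γ, G.s γ = rX x ∧ lact γ x = y
  rX_surj : Function.Surjective rX
  sX_surj : Function.Surjective sX

/-- Continuity of the structure maps of a topological groupoid. -/
structure IsTopologicalGroupoid {Arr Obj : Type} [TopologicalSpace Arr]
    [TopologicalSpace Obj] (D : GroupoidData Arr Obj) : Prop where
  continuous_r : Continuous D.r
  continuous_s : Continuous D.s
  continuous_unit : Continuous D.unit
  continuous_inv : Continuous D.inv
  continuous_comp : Continuous fun p : {q : Arr × Arr // D.s q.1 = D.r q.2} =>
    D.comp p.val.1 p.val.2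

/-- A Haar system for groupoid data `D`, relative to a set `Real` of
"genuine" arrows (take `Real = Set.univ` for an honest groupoid): a family
of Radon measures `κ u`, `u` a unit, with support exactly the genuine arrows
with range `u`, left invariant, and continuous against compactly supported
continuous functions. -/
def IsHaarSystemOn {Arr Obj : Type} [TopologicalSpace Arr] [TopologicalSpace Obj]
    [MeasurableSpace Arr] (D : GroupoidData Arr Obj) (Real : Set Arr)
    (κ : Obj → MeasureTheory.Measure Arr) : Prop :=
  (∀ u, κ u ({a | D.r a = u} ∩ Real)ᶜ = 0) ∧
  (∀ u U, IsOpen U → (U ∩ ({a | D.r a = u} ∩ Real)).Nonempty → 0 < κ u U) ∧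
  (∀ u K, IsCompact K → κ u K < ⊤) ∧
  (∀ a ∈ Real, ∀ f : Arr → ℝ, Continuous f → HasCompactSupport f →
    ∫ b, f (D.comp a b) ∂(κ (D.s a)) = ∫ b, f b ∂(κ (D.r a))) ∧
  (∀ f : Arr → ℝ, Continuous f → HasCompactSupport f →
    Continuous fun u => ∫ b, f b ∂(κ u))

/-- The measure `ν = μ ∘ κ` on the arrows induced by a measure `μ` on the
units and a Haar system `κ`. -/
noncomputable def nuMeasure {Arr Obj : Type} [MeasurableSpace Arr] [MeasurableSpace Obj]
    (κ : Obj → MeasureTheory.Measure Arr) (μ : MeasureTheory.Measure Obj) :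
    MeasureTheory.Measure Arr :=
  μ.bind κ

/-- Quasi-invariance of a measure `μ` on the unit space: `ν = μ∘κ` is
equivalent to its image under the inversion map. -/
def IsQuasiInvariant {Arr Obj : Type} [MeasurableSpace Arr] [MeasurableSpace Obj]
    (κ : Obj → MeasureTheory.Measure Arr) (inv : Arr → Arr)
    (μ : MeasureTheory.Measure Obj) : Prop :=
  nuMeasure κ μ ≪ (nuMeasure κ μ).map inv ∧ (nuMeasure κ μ).map inv ≪ nuMeasure κ μ


section EquivalenceSetting

variable {ArrG ObjG ArrH ObjH X : Type}

/-- The topological conditions making `X` a `(G,H)`-equivalence of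
topological groupoids: both groupoids are topological, the algebraic
equivalence conditions hold, the moment maps are continuous open surjections,
and the two actions are continuous and proper. -/
structure IsTopEquivalence [TopologicalSpace ArrG] [TopologicalSpace ObjG]
    [TopologicalSpace ArrH] [TopologicalSpace ObjH] [TopologicalSpace X]
    (G : GroupoidData ArrG ObjG) (H : GroupoidData ArrH ObjH)
    (rX : X → ObjG) (sX : X → ObjH)
    (lact : ArrG → X → X) (ract : X → ArrH → X) : Prop where
  G_groupoid : G.IsGroupoid
  H_groupoid : H.IsGroupoid
  G_top : IsTopologicalGroupoid G
  H_top : IsTopologicalGroupoid H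
  equivalence : IsEquivalenceData G H rX sX lact ract
  continuous_rX : Continuous rX
  continuous_sX : Continuous sX
  open_rX : IsOpenMap rX
  open_sX : IsOpenMap sX
  continuous_lact : Continuous fun p : {q : ArrG × X // G.s q.1 = rX q.2} =>
    lact p.val.1 p.val.2
  continuous_ract : Continuous fun p : {q : X × ArrH // sX q.1 = H.r q.2} =>
    ract p.val.1 p.val.2
  proper_lact : IsProperMap fun p : {q : ArrG × X // G.s q.1 = rX q.2} =>
    (lact p.val.1 p.val.2, p.val.2)
  proper_ract : IsProperMap fun p : {q : X × ArrH // sX q.1 = H.r q.2} =>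
    (ract p.val.1 p.val.2, p.val.2)

/-- The iterated transformation groupoid `E = G ⋉ X ⋊ H` (realized on the
ambient product; the genuine arrows form the set `ECond`). -/
def EData (G : GroupoidData ArrG ObjG) (H : GroupoidData ArrH ObjH)
    (rX : X → ObjG) (sX : X → ObjH)
    (lact : ArrG → X → X) (ract : X → ArrH → X) :
    GroupoidData (ArrG × X × ArrH) X where
  r := fun a => a.2.1
  s := fun a => ract (lact (G.inv a.1) a.2.1) a.2.2
  unit := fun x => (G.unit (rX x), x, H.unit (sX x))
  comp := fun a b => (G.comp a.1 b.1, a.2.1, H.comp a.2.2 b.2.2)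
  inv := fun a => (G.inv a.1, ract (lact (G.inv a.1) a.2.1) a.2.2, H.inv a.2.2)

/-- The set of genuine arrows of `E = G ⋉ X ⋊ H`:
`{(γ,x,η) : r(γ) = r_X(x), s_X(x) = r(η)}`. -/
def ECond (G : GroupoidData ArrG ObjG) (H : GroupoidData ArrH ObjH)
    (rX : X → ObjG) (sX : X → ObjH) : Set (ArrG × X × ArrH) :=
  {a | G.r a.1 = rX a.2.1 ∧ sX a.2.1 = H.r a.2.2}

/-- The transformation groupoid `Ḡ = G ⋉ X` (realized on the ambient
product; genuine arrows form `GbarCond`). -/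
def GbarData (G : GroupoidData ArrG ObjG) (rX : X → ObjG)
    (lact : ArrG → X → X) : GroupoidData (ArrG × X) X where
  r := fun p => p.2
  s := fun p => lact (G.inv p.1) p.2
  unit := fun x => (G.unit (rX x), x)
  comp := fun p q => (G.comp p.1 q.1, p.2)
  inv := fun p => (G.inv p.1, lact (G.inv p.1) p.2)

/-- Genuine arrows of `Ḡ = G ⋉ X`. -/
def GbarCond (G : GroupoidData ArrG ObjG) (rX : X → ObjG) : Set (ArrG × X) :=
  {p | G.r p.1 = rX p.2}

/-- The transformation groupoid `H̄ = X ⋊ H` (realized on the ambient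
product; genuine arrows form `HbarCond`). -/
def HbarData (H : GroupoidData ArrH ObjH) (sX : X → ObjH)
    (ract : X → ArrH → X) : GroupoidData (X × ArrH) X where
  r := fun p => p.1
  s := fun p => ract p.1 p.2
  unit := fun x => (x, H.unit (sX x))
  comp := fun p q => (p.1, H.comp p.2 q.2)
  inv := fun p => (ract p.1 p.2, H.inv p.2)

/-- Genuine arrows of `H̄ = X ⋊ H`. -/
def HbarCond (H : GroupoidData ArrH ObjH) (sX : X → ObjH) : Set (X × ArrH) :=
  {p | sX p.1 = H.r p.2}

variable [MeasurableSpace ArrG] [MeasurableSpace ArrH] [MeasurableSpace X]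

/-- The canonical Haar system `λ_E^x = λ^{r_X(x)} × δ_x × σ^{s_X(x)}` on
`E = G ⋉ X ⋊ H`. -/
noncomputable def EHaar (lamG : ObjG → MeasureTheory.Measure ArrG)
    (sigH : ObjH → MeasureTheory.Measure ArrH) (rX : X → ObjG) (sX : X → ObjH) :
    X → MeasureTheory.Measure (ArrG × X × ArrH) := fun x =>
  (lamG (rX x)).prod ((MeasureTheory.Measure.dirac x).prod (sigH (sX x)))

/-- The Haar system `λ^{r_X(x)} × δ_x` on `Ḡ = G ⋉ X`. -/
noncomputable def GbarHaar (lamG : ObjG → MeasureTheory.Measure ArrG)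
    (rX : X → ObjG) : X → MeasureTheory.Measure (ArrG × X) := fun x =>
  (lamG (rX x)).prod (MeasureTheory.Measure.dirac x)

/-- The Haar system `δ_x × σ^{s_X(x)}` on `H̄ = X ⋊ H`. -/
noncomputable def HbarHaar (sigH : ObjH → MeasureTheory.Measure ArrH)
    (sX : X → ObjH) : X → MeasureTheory.Measure (X × ArrH) := fun x =>
  (MeasureTheory.Measure.dirac x).prod (sigH (sX x))

end EquivalenceSetting


open scoped InnerProductSpace


/-! ### Auxiliary results -/

section Aux
open Filter Topology Metric Function Set
open scoped Classical




variable (α : Type) [TopologicalSpace α] [T2Space α] [LocallyCompactSpace α]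
  [SecondCountableTopology α]

theorem polishSpace_of_locallyCompact : PolishSpace α := by
  letI m : MetricSpace α := TopologicalSpace.metrizableSpaceMetric α
  -- the "compact radius" function
  set S : α → Set ℝ := fun x => {r : ℝ | 0 ≤ r ∧ r ≤ 1 ∧ IsCompact (closedBall x r)} with hS
  have hmem0 : ∀ x, (0:ℝ) ∈ S x := by
    intro x
    refine ⟨le_rfl, zero_le_one, ?_⟩
    rw [closedBall_zero]
    exact isCompact_singleton
  have hne : ∀ x, (S x).Nonempty := fun x => ⟨0, hmem0 x⟩
  have hbdd : ∀ x, BddAbove (S x) := fun x => ⟨1, fun r hr => hr.2.1⟩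
  set δ : α → ℝ := fun x => sSup (S x) with hδ
  have hδ0 : ∀ x, 0 ≤ δ x := fun x => le_csSup (hbdd x) (hmem0 x)
  have hδ1 : ∀ x, δ x ≤ 1 := fun x => csSup_le (hne x) fun r hr => hr.2.1
  have hδpos : ∀ x, 0 < δ x := by
    intro x
    obtain ⟨s, hs, _, hsc⟩ := local_compact_nhds (n := univ) (x := x) univ_mem
    obtain ⟨ε, hε, hεs⟩ := Metric.nhds_basis_closedBall.mem_iff.1 hs
    have hmem : min ε 1 ∈ S x := by
      refine ⟨le_min hε.le zero_le_one, min_le_right _ _, ?_⟩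
      exact hsc.of_isClosed_subset isClosed_closedBall
        ((closedBall_subset_closedBall (min_le_left _ _)).trans hεs)
    exact lt_of_lt_of_le (lt_min hε zero_lt_one) (le_csSup (hbdd x) hmem)
  have hcpt : ∀ x r, r < δ x → IsCompact (closedBall x r) := by
    intro x r hr
    obtain ⟨r', hr', hrr'⟩ := exists_lt_of_lt_csSup (hne x) hr
    exact hr'.2.2.of_isClosed_subset isClosed_closedBall (closedBall_subset_closedBall hrr'.le)
  have hlip : ∀ x y, δ x - δ y ≤ dist x y := by
    intro x y
    rcases le_or_gt (δ x - dist x y) 0 with h | h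
    · linarith [hδ0 y]
    · have : ∀ r, 0 ≤ r → r < δ x - dist x y → r ∈ S y := by
        intro r hr0 hr
        refine ⟨hr0, le_trans (by linarith [dist_nonneg (x := x) (y := y)]) (hδ1 x), ?_⟩
        refine (hcpt x (r + dist x y) (by linarith)).of_isClosed_subset isClosed_closedBall ?_
        intro z hz
        simp only [mem_closedBall] at hz ⊢
        calc dist z x ≤ dist z y + dist y x := dist_triangle _ _ _
          _ ≤ r + dist x y := by rw [dist_comm y x]; linarith
      have : ∀ r, r < δ x - dist x y → r ≤ δ y := by
        intro r hr
        rcases le_or_gt r 0 with h0 | h0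
        · exact h0.trans (hδ0 y)
        · exact le_csSup (hbdd y) (this r h0.le hr)
      by_contra hcon
      push_neg at hcon
      have h2 : δ y < δ x - dist x y := by linarith
      obtain ⟨r, hr1, hr2⟩ := exists_between h2
      exact absurd (this r hr2) (not_le.2 hr1)
  have hδcont : Continuous δ := by
    refine Metric.continuous_iff.2 fun x ε hε => ⟨ε, hε, fun y hy => ?_⟩
    have h1 := hlip x y
    have h2 := hlip y x
    have h3 : dist x y = dist y x := dist_comm x y
    rw [Real.dist_eq, abs_lt]
    constructor <;> linarith
  -- embed into the completion times ℝ via x ↦ (x, (δ x)⁻¹)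
  set j : α → (UniformSpace.Completion α) × ℝ :=
    fun x => ((x : UniformSpace.Completion α), (δ x)⁻¹) with hj
  have hjcont : Continuous j := by
    refine Continuous.prodMk (UniformSpace.Completion.continuous_coe α) ?_
    exact hδcont.inv₀ fun x => (hδpos x).ne'
  have hjinj : Function.Injective j := fun x y hxy =>
    UniformSpace.Completion.coe_injective α (congrArg Prod.fst hxy)
  have hjemb : Topology.IsEmbedding j := by
    refine ⟨Topology.IsInducing.of_comp hjcont continuous_fst ?_, hjinj⟩
    exact (UniformSpace.Completion.isUniformEmbedding_coe α).isEmbedding.toIsInducing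
  have hrange : IsClosed (Set.range j) := by
    refine IsSeqClosed.isClosed ?_
    intro x p hx hp
    choose a ha using fun n => hx n
    have hx1 : Tendsto (fun n => ((a n : UniformSpace.Completion α))) atTop (𝓝 p.1) := by
      have := (continuous_fst.tendsto p).comp hp
      convert this using 1
      funext n
      simp only [Function.comp_apply]
      rw [← ha n]
    have hx2 : Tendsto (fun n => (δ (a n))⁻¹) atTop (𝓝 p.2) := by
      have := (continuous_snd.tendsto p).comp hp
      convert this using 1
      funext n
      simp only [Function.comp_apply]
      rw [← ha n]
    have ht1 : (1:ℝ) ≤ p.2 := by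
      refine ge_of_tendsto hx2 (Eventually.of_forall fun n => ?_)
      rw [le_inv_comm₀ one_pos (hδpos _)]
      simpa using hδ1 (a n)
    have htpos : (0:ℝ) < p.2 := lt_of_lt_of_le one_pos ht1
    have hδlim : Tendsto (fun n => δ (a n)) atTop (𝓝 (p.2)⁻¹) := by
      have := hx2.inv₀ htpos.ne'
      simpa [inv_inv] using this
    set L : ℝ := (p.2)⁻¹ with hL
    have hLpos : 0 < L := inv_pos.2 htpos
    have hacauchy : CauchySeq a := by
      rw [Metric.cauchySeq_iff]
      have := Metric.cauchySeq_iff.1 hx1.cauchySeq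
      intro ε hε
      obtain ⟨N, hN⟩ := this ε hε
      exact ⟨N, fun m hm n hn => by
        have := hN m hm n hn
        rwa [UniformSpace.Completion.dist_eq] at this⟩
    have hev : ∀ᶠ n in atTop, L/2 < δ (a n) :=
      hδlim.eventually (eventually_gt_nhds (by linarith))
    obtain ⟨N₁, hN₁⟩ := eventually_atTop.1 hev
    obtain ⟨N₂, hN₂⟩ := Metric.cauchySeq_iff'.1 hacauchy (L/8) (by linarith)
    set M := max N₁ N₂ with hM
    have hball : ∀ n ≥ M, a n ∈ closedBall (a M) (L/4) := by
      intro n hn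
      have h1 := hN₂ n (le_trans (le_max_right _ _) hn)
      have h2 := hN₂ M (le_max_right _ _)
      simp only [mem_closedBall]
      calc dist (a n) (a M) ≤ dist (a n) (a N₂) + dist (a N₂) (a M) := dist_triangle _ _ _
        _ ≤ L/8 + L/8 := by rw [dist_comm (a N₂) (a M)]; exact add_le_add h1.le h2.le
        _ = L/4 := by ring
    have hKc : IsCompact (closedBall (a M) (L/4)) := by
      refine hcpt (a M) (L/4) ?_
      have := hN₁ M (le_max_left _ _)
      linarith
    obtain ⟨q, -, hq⟩ := cauchySeq_tendsto_of_isComplete hKc.isComplete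
      (fun n => hball (n + M) (Nat.le_add_left _ _))
      (hacauchy.comp_tendsto (tendsto_add_atTop_nat M))
    have haq : Tendsto a atTop (𝓝 q) := (tendsto_add_atTop_iff_nat M).1 hq
    have : Tendsto (fun n => j (a n)) atTop (𝓝 (j q)) := (hjcont.tendsto q).comp haq
    have hpj : p = j q := by
      refine tendsto_nhds_unique ?_ this
      have : (fun n => j (a n)) = x := funext ha
      rwa [this]
    exact ⟨q, hpj.symm⟩
  exact (Topology.IsClosedEmbedding.mk hjemb hrange).polishSpace





/-- Least index satisfying a countable family of measurable conditions is measurable. -/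
lemma measurable_natFind {Y : Type*} [MeasurableSpace Y] (A : ℕ → Set Y)
    (hA : ∀ i, MeasurableSet (A i)) :
    Measurable (fun y => if h : ∃ i, y ∈ A i then Nat.find h else 0) := by
  set F : Y → ℕ := fun y => if h : ∃ i, y ∈ A i then Nat.find h else 0 with hF
  have key : ∀ m : ℕ, MeasurableSet (F ⁻¹' {m}) := by
    intro m
    have hid : F ⁻¹' {m} =
        (A m ∩ ⋂ i, ⋂ _ : i < m, (A i)ᶜ) ∪ ((⋂ i, (A i)ᶜ) ∩ (if m = 0 then univ else ∅)) := by
      ext z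
      by_cases hz : ∃ i, z ∈ A i
      · have hFz : F z = Nat.find hz := dif_pos hz
        simp only [mem_preimage, mem_singleton_iff, hFz, mem_union, mem_inter_iff, mem_iInter,
          mem_compl_iff, Nat.find_eq_iff]
        constructor
        · rintro ⟨h1, h2⟩; exact Or.inl ⟨h1, h2⟩
        · rintro (⟨h1, h2⟩ | ⟨h1, -⟩)
          · exact ⟨h1, h2⟩
          · exact absurd hz (by push_neg; exact h1)
      · have hFz : F z = 0 := dif_neg hz
        push_neg at hz
        simp only [mem_preimage, mem_singleton_iff, hFz, mem_union, mem_inter_iff, mem_iInter,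
          mem_compl_iff]
        constructor
        · intro h0
          right
          refine ⟨hz, ?_⟩
          rw [if_pos h0.symm]; trivial
        · rintro (⟨h1, -⟩ | ⟨-, h2⟩)
          · exact absurd h1 (hz m)
          · by_cases h0 : m = 0
            · exact h0.symm
            · rw [if_neg h0] at h2; exact absurd h2 (notMem_empty z)
    rw [hid]
    refine MeasurableSet.union (MeasurableSet.inter (hA m) ?_) (MeasurableSet.inter ?_ ?_)
    · exact MeasurableSet.iInter fun i => MeasurableSet.iInter fun _ => (hA i).compl
    · exact MeasurableSet.iInter fun i => (hA i).compl
    · split <;> simp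
  exact measurable_to_nat fun y => key (F y)

/-- Composing a measurable ℕ-parametrized family with a measurable index function. -/
lemma measurable_nat_elim {Y : Type*} [MeasurableSpace Y] {g : Y → ℕ} (hg : Measurable g)
    {h : Y → ℕ → ℕ} (hh : ∀ j, Measurable fun y => h y j) :
    Measurable fun y => h y (g y) := by
  refine measurable_to_nat fun y => ?_
  have hid : (fun y => h y (g y)) ⁻¹' {h y (g y)} =
      ⋃ j, (g ⁻¹' {j}) ∩ ((fun z => h z j) ⁻¹' {h y (g y)}) := by
    ext z
    simp only [mem_preimage, mem_singleton_iff, mem_iUnion, mem_inter_iff]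
    exact ⟨fun hz => ⟨g z, rfl, hz⟩, fun ⟨j, hj, hz⟩ => by rw [← hj] at hz; exact hz⟩
  rw [hid]
  exact MeasurableSet.iUnion fun j =>
    (hg (measurableSet_singleton j)).inter ((hh j) (measurableSet_singleton _))

/-- A continuous open surjection from a Polish space admits a Borel section. -/
theorem exists_measurable_section {X Y : Type*} [TopologicalSpace X] [PolishSpace X]
    [MeasurableSpace X] [BorelSpace X] [TopologicalSpace Y] [T2Space Y] [MeasurableSpace Y]
    [OpensMeasurableSpace Y] {f : X → Y} (hf : Continuous f) (hopen : IsOpenMap f)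
    (hsurj : Function.Surjective f) :
    ∃ c : Y → X, Measurable c ∧ ∀ y, f (c y) = y := by
  cases isEmpty_or_nonempty X with
  | inl hX =>
    have hY : IsEmpty Y := ⟨fun y => IsEmpty.elim hX (hsurj y).choose⟩
    exact ⟨fun y => (hY.elim y), measurable_of_empty _, fun y => (hY.elim y)⟩
  | inr hX =>
  letI := TopologicalSpace.upgradeIsCompletelyMetrizable X
  obtain ⟨u, hu⟩ := TopologicalSpace.exists_dense_seq X
  set r : ℕ → ℝ := fun k => (1/2)^k with hr
  have hrpos : ∀ k, 0 < r k := fun k => pow_pos (by norm_num) k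
  -- the ball-search recursion
  set A0 : ℕ → Set Y := fun i => f '' ball (u i) (r 0) with hA0
  set A : ℕ → ℕ → ℕ → Set Y :=
    fun k j i => f '' (ball (u i) (r (k+1)) ∩ ball (u j) (r k)) with hA
  set step : ℕ → ℕ → Y → ℕ :=
    fun k j y => if h : ∃ i, y ∈ A k j i then Nat.find h else 0 with hstep
  set n : Y → ℕ → ℕ := fun y => Nat.rec
    (if h : ∃ i, y ∈ A0 i then Nat.find h else 0)
    (fun k ih => step k ih y) with hn
  -- the invariant
  have hinv : ∀ y k, y ∈ f '' ball (u (n y k)) (r k) := by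
    intro y k
    induction k with
    | zero =>
      obtain ⟨x, hx⟩ := hsurj y
      obtain ⟨i, hi⟩ := hu.exists_dist_lt x (hrpos 0)
      have hex : ∃ i, y ∈ A0 i := ⟨i, ⟨x, mem_ball.2 hi, hx⟩⟩
      have h2 : n y 0 = Nat.find hex := dif_pos hex
      rw [h2]
      exact Nat.find_spec hex
    | succ k ih =>
      obtain ⟨x, hx1, hx2⟩ := ih
      obtain ⟨i, hi⟩ := hu.exists_dist_lt x (hrpos (k+1))
      have hex : ∃ i, y ∈ A k (n y k) i :=
        ⟨i, ⟨x, ⟨mem_ball.2 hi, hx1⟩, hx2⟩⟩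
      have h2 : n y (k+1) = Nat.find hex := dif_pos hex
      rw [h2]
      exact image_mono (f := f) inter_subset_left (Nat.find_spec hex)
  -- the chain condition
  have hchain : ∀ y k, y ∈ f '' (ball (u (n y (k+1))) (r (k+1)) ∩ ball (u (n y k)) (r k)) := by
    intro y k
    obtain ⟨x, hx1, hx2⟩ := hinv y k
    obtain ⟨i, hi⟩ := hu.exists_dist_lt x (hrpos (k+1))
    have hex : ∃ i, y ∈ A k (n y k) i :=
      ⟨i, ⟨x, ⟨mem_ball.2 hi, hx1⟩, hx2⟩⟩
    have h2 : n y (k+1) = Nat.find hex := dif_pos hex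
    rw [h2]
    exact Nat.find_spec hex
  -- centers form a Cauchy sequence
  have hdist : ∀ y k, dist (u (n y k)) (u (n y (k+1))) ≤ 2 * r k := by
    intro y k
    obtain ⟨x, ⟨hx1, hx2⟩, -⟩ := hchain y k
    rw [mem_ball] at hx1 hx2
    calc dist (u (n y k)) (u (n y (k+1)))
        ≤ dist (u (n y k)) x + dist x (u (n y (k+1))) := dist_triangle _ _ _
      _ ≤ r k + r (k+1) := by
          rw [dist_comm (u (n y k)) x]; exact add_le_add hx2.le hx1.le
      _ ≤ 2 * r k := by
          have : r (k+1) ≤ r k := by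
            rw [hr]; exact pow_le_pow_of_le_one (by norm_num) (by norm_num) (Nat.le_succ k)
          linarith
  have hcauchy : ∀ y, CauchySeq (fun k => u (n y k)) := by
    intro y
    refine cauchySeq_of_dist_le_of_summable (fun k => 2 * r k) (fun k => hdist y k) ?_
    exact (summable_geometric_two).mul_left 2
  have hlim : ∀ y, ∃ p, Tendsto (fun k => u (n y k)) atTop (𝓝 p) :=
    fun y => cauchySeq_tendsto_of_complete (hcauchy y)
  choose c hc using hlim
  refine ⟨c, ?_, ?_⟩
  · -- measurability
    have hnmeas : ∀ k, Measurable fun y => n y k := by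
      intro k
      induction k with
      | zero =>
        exact measurable_natFind A0 fun i => (hopen _ isOpen_ball).measurableSet
      | succ k ih =>
        have : (fun y => n y (k+1)) = fun y => step k (n y k) y := rfl
        rw [this]
        exact measurable_nat_elim ih fun j =>
          measurable_natFind (A k j) fun i =>
            (hopen _ (isOpen_ball.inter isOpen_ball)).measurableSet
    exact measurable_of_tendsto_metrizable' atTop
      (fun k => measurable_from_nat.comp (hnmeas k))
      (tendsto_pi_nhds.2 fun y => hc y)
  · -- section property
    intro y
    have hxk : ∀ k, ∃ x, x ∈ ball (u (n y k)) (r k) ∧ f x = y := by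
      intro k
      obtain ⟨x, hx1, hx2⟩ := hinv y k
      exact ⟨x, hx1, hx2⟩
    choose xk hxk1 hxk2 using hxk
    have hxklim : Tendsto xk atTop (𝓝 (c y)) := by
      have h1 : Tendsto (fun k => dist (xk k) (u (n y k))) atTop (𝓝 0) := by
        refine squeeze_zero (fun k => dist_nonneg) (fun k => (mem_ball.1 (hxk1 k)).le) ?_
        rw [hr]
        simpa using tendsto_pow_atTop_nhds_zero_of_lt_one (by norm_num : (0:ℝ) ≤ 1/2)
          (by norm_num : (1/2:ℝ) < 1)
      exact (hc y).congr_dist (by simpa [dist_comm] using h1)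
    have : Tendsto (fun k => f (xk k)) atTop (𝓝 (f (c y))) := (hf.tendsto _).comp hxklim
    have h2 : Tendsto (fun k => f (xk k)) atTop (𝓝 y) := by
      simp only [hxk2]
      exact tendsto_const_nhds
    exact tendsto_nhds_unique this h2

end Aux

section CastAux
open scoped InnerProductSpace

lemma cast_eq_cast_of_heq {A B C : Type} (h1 : A = C) (h2 : B = C) {u : A} {v : B}
    (h : HEq u v) : cast h1 u = cast h2 v := by
  subst h1; subst h2; exact eq_of_heq h

variable {X : Type} (ℋ : X → Type)

lemma bundle_apply_cast (g : ∀ x, ℋ x) {x y : X} (h : x = y) :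
    g y = cast (congrArg ℋ h) (g x) := by subst h; rfl

lemma bundle_norm_cast [∀ x, NormedAddCommGroup (ℋ x)] {x y : X} (h : x = y) (v : ℋ x) :
    ‖cast (congrArg ℋ h) v‖ = ‖v‖ := by subst h; rfl

lemma bundle_inner_cast [∀ x, NormedAddCommGroup (ℋ x)] [∀ x, InnerProductSpace ℂ (ℋ x)]
    {x y : X} (h : x = y) (v w : ℋ x) :
    ⟪cast (congrArg ℋ h) v, cast (congrArg ℋ h) w⟫_ℂ = ⟪v, w⟫_ℂ := by subst h; rfl

end CastAux

/-- Given a Borel Hilbert bundle `X*ℋ` (presented by a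
special orthogonal fundamental sequence `es`), a `(G,H)`-equivalence `X` and
a Borel homomorphism `U` of `E = G⋉X⋊H` into `Iso(X*ℋ)`, there is a Borel
section `e` of `X*ℋ` with `e(x)` a unit vector whenever `ℋ(x) ≠ 0` and
`e(x·η) = U*_{(r(x),x,η)} e(x)` for all `(x,η) ∈ H̄ = X⋊H`. -/
theorem statement10
    {ArrG ObjG ArrH ObjH X : Type}
    [TopologicalSpace ArrG] [TopologicalSpace ObjG] [TopologicalSpace ArrH]
    [TopologicalSpace ObjH] [TopologicalSpace X]
    [T2Space ArrG] [T2Space ObjG] [T2Space ArrH] [T2Space ObjH] [T2Space X]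
    [SecondCountableTopology ArrG] [SecondCountableTopology ObjG]
    [SecondCountableTopology ArrH] [SecondCountableTopology ObjH]
    [SecondCountableTopology X]
    [LocallyCompactSpace ArrG] [LocallyCompactSpace ObjG] [LocallyCompactSpace ArrH]
    [LocallyCompactSpace ObjH] [LocallyCompactSpace X]
    [MeasurableSpace ArrG] [BorelSpace ArrG] [MeasurableSpace ArrH] [BorelSpace ArrH]
    [MeasurableSpace X] [BorelSpace X] [MeasurableSpace ObjH] [BorelSpace ObjH]
    (G : GroupoidData ArrG ObjG) (H : GroupoidData ArrH ObjH)
    (rX : X → ObjG) (sX : X → ObjH) (lact : ArrG → X → X) (ract : X → ArrH → X)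
    (heq : IsTopEquivalence G H rX sX lact ract)
    (lamG : ObjG → MeasureTheory.Measure ArrG)
    (hlamG : IsHaarSystemOn G Set.univ lamG)
    (sigH : ObjH → MeasureTheory.Measure ArrH)
    (hsigH : IsHaarSystemOn H Set.univ sigH)
    -- a Borel Hilbert bundle `X*ℋ` with special orthogonal fundamental sequence:
    (ℋ : X → Type) [∀ x, NormedAddCommGroup (ℋ x)] [∀ x, InnerProductSpace ℂ (ℋ x)]
    [∀ x, CompleteSpace (ℋ x)]
    (es : ℕ → ∀ x, ℋ x)
    (hes_on : ∀ (x : X) i j, es i x ≠ 0 → es j x ≠ 0 →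
      ⟪es i x, es j x⟫_ℂ = if i = j then 1 else 0)
    (hes_unit : ∀ (x : X) i, es i x ≠ 0 → ‖es i x‖ = 1)
    (hes_total : ∀ x : X,
      (Submodule.span ℂ (Set.range fun i => es i x)).topologicalClosure = ⊤)
    (hes_first : ∀ x : X, (∃ v : ℋ x, v ≠ 0) → es 0 x ≠ 0)
    -- a Borel homomorphism `U : E → Iso(X*ℋ)`:
    (U : ∀ a : ArrG × X × ArrH,
      ℋ ((EData G H rX sX lact ract).s a) ≃ₗᵢ[ℂ] ℋ ((EData G H rX sX lact ract).r a))
    (hU_borel : ∀ i j, Measurable fun a : ArrG × X × ArrH =>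
      ⟪U a (es i ((EData G H rX sX lact ract).s a)),
        es j ((EData G H rX sX lact ract).r a)⟫_ℂ)
    (hU_hom : ∀ a b, a ∈ ECond G H rX sX → b ∈ ECond G H rX sX →
      ∀ (h : (EData G H rX sX lact ract).s a = (EData G H rX sX lact ract).r b)
        (hs : (EData G H rX sX lact ract).s ((EData G H rX sX lact ract).comp a b) =
          (EData G H rX sX lact ract).s b)
        (v : ℋ ((EData G H rX sX lact ract).s b)),
        U ((EData G H rX sX lact ract).comp a b) (cast (congrArg ℋ hs.symm) v) =
          U a (cast (congrArg ℋ h.symm) (U b v)))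
    : ∃ e : ∀ x, ℋ x,
        (∀ i, Measurable fun x => ⟪e x, es i x⟫_ℂ) ∧
        (∀ x : X, (∃ v : ℋ x, v ≠ 0) → ‖e x‖ = 1) ∧
        (∀ x η, sX x = H.r η →
          ∀ hs : (EData G H rX sX lact ract).s (G.unit (rX x), x, η) = ract x η,
          e (ract x η) = cast (congrArg ℋ hs) ((U (G.unit (rX x), x, η)).symm (e x))) := by
  classical
  haveI : PolishSpace X := polishSpace_of_locallyCompact X
  haveI : PolishSpace ArrH := polishSpace_of_locallyCompact ArrH
  letI mObjG : MeasurableSpace ObjG := borel ObjG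
  haveI : BorelSpace ObjG := ⟨rfl⟩
  obtain ⟨c, hcmeas, hcsec⟩ := exists_measurable_section heq.continuous_rX heq.open_rX
    heq.equivalence.rX_surj
  -- inverses of units are units
  have hGinvUnit : ∀ u, G.inv (G.unit u) = G.unit u := by
    intro u
    have h1 := heq.G_groupoid.inv_comp (G.unit u)
    rw [heq.G_groupoid.s_unit] at h1
    have h2 := heq.G_groupoid.comp_unit (G.inv (G.unit u))
    rw [heq.G_groupoid.s_inv, heq.G_groupoid.r_unit] at h2
    rw [← h2, h1]
  -- freeness gives uniqueness of the implementing arrow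
  have huniq : ∀ (w : X) (η₁ η₂ : ArrH), sX w = H.r η₁ → sX w = H.r η₂ →
      ract w η₁ = ract w η₂ → η₁ = η₂ := by
    intro w η₁ η₂ h1 h2 h12
    have hs1 : sX (ract w η₁) = H.s η₁ := heq.equivalence.right_action.moment w η₁ h1
    have hs2 : sX (ract w η₂) = H.s η₂ := heq.equivalence.right_action.moment w η₂ h2
    have hss : H.s η₁ = H.s η₂ := by rw [← hs1, ← hs2, h12]
    have hcble : H.s η₁ = H.r (H.inv η₂) := by rw [heq.H_groupoid.r_inv, hss]
    have hract : ract w (H.comp η₁ (H.inv η₂)) = w := by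
      rw [heq.equivalence.right_action.comp_act w η₁ (H.inv η₂) h1 hcble, h12,
        ← heq.equivalence.right_action.comp_act w η₂ (H.inv η₂) h2
          (by rw [heq.H_groupoid.r_inv]), heq.H_groupoid.comp_inv]
      rw [← h2]
      exact heq.equivalence.right_action.unit_act w
    have hmom : sX w = H.r (H.comp η₁ (H.inv η₂)) := by
      rw [heq.H_groupoid.r_comp η₁ (H.inv η₂) hcble]; exact h1
    have hunit := heq.equivalence.free_right w (H.comp η₁ (H.inv η₂)) hmom hract
    have hassoc := heq.H_groupoid.comp_assoc η₁ (H.inv η₂) η₂ hcble (heq.H_groupoid.s_inv η₂)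
    rw [heq.H_groupoid.inv_comp η₂] at hassoc
    have hcu := heq.H_groupoid.comp_unit η₁
    rw [hss] at hcu
    rw [hcu, hunit, h2] at hassoc
    exact ((heq.H_groupoid.unit_comp η₂).symm.trans hassoc).symm
  -- the Borel cross-section data
  set y : X → X := fun x => c (rX x) with hy
  have hyx : ∀ x, rX (y x) = rX x := fun x => hcsec (rX x)
  have horbit : ∀ x, ∃ η, sX (y x) = H.r η ∧ ract (y x) η = x :=
    fun x => (heq.equivalence.rX_fibres (y x) x).1 (hyx x)
  set ς : X → ArrH := fun x => (horbit x).choose with hςdef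
  have hς1 : ∀ x, sX (y x) = H.r (ς x) := fun x => (horbit x).choose_spec.1
  have hς2 : ∀ x, ract (y x) (ς x) = x := fun x => (horbit x).choose_spec.2
  have hymeas : Measurable y := hcmeas.comp heq.continuous_rX.measurable
  -- measurability of ς via the Lusin–Souslin theorem
  have hςmeas : Measurable ς := by
    have hclosed : IsClosed {p : X × ArrH | sX p.1 = H.r p.2} :=
      isClosed_eq (heq.continuous_sX.comp continuous_fst)
        (heq.H_top.continuous_r.comp continuous_snd)
    haveI hPS : PolishSpace {q : X × ArrH // sX q.1 = H.r q.2} := hclosed.polishSpace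
    haveI hBS : BorelSpace {q : X × ArrH // sX q.1 = H.r q.2} :=
      Subtype.borelSpace {p : X × ArrH | sX p.1 = H.r p.2}
    set ψ : {q : X × ArrH // sX q.1 = H.r q.2} → X × X :=
      fun p => (p.val.1, ract p.val.1 p.val.2) with hψdef
    have hψcont : Continuous ψ :=
      Continuous.prodMk (continuous_fst.comp continuous_subtype_val) heq.continuous_ract
    have hψinj : Function.Injective ψ := by
      rintro ⟨⟨x1, η1⟩, hp1⟩ ⟨⟨x2, η2⟩, hp2⟩ hpq
      have hx : x1 = x2 := congrArg Prod.fst hpq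
      subst hx
      have hr : ract x1 η1 = ract x1 η2 := congrArg Prod.snd hpq
      have := huniq x1 η1 η2 hp1 hp2 hr
      subst this
      rfl
    have hemb : MeasurableEmbedding ψ := hψcont.measurableEmbedding hψinj
    set Φ : X → {q : X × ArrH // sX q.1 = H.r q.2} := fun x => ⟨(y x, ς x), hς1 x⟩ with hΦdef
    have hΦmeas : Measurable Φ := by
      rw [← hemb.measurable_comp_iff]
      have : ψ ∘ Φ = fun x => (y x, x) := by
        funext x
        show (y x, ract (y x) (ς x)) = (y x, x)
        rw [hς2 x]
      rw [this]
      exact hymeas.prodMk measurable_id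
    exact measurable_snd.comp (measurable_subtype_coe.comp hΦmeas)
  -- the canonical arrow from x to its orbit representative
  set a : X → ArrG × X × ArrH := fun x => (G.unit (rX (y x)), y x, ς x) with hadef
  have hameas : Measurable a := by
    refine Measurable.prodMk ?_ (Measurable.prodMk hymeas hςmeas)
    exact ((heq.G_top.continuous_unit.comp heq.continuous_rX).measurable).comp hymeas
  have hsa : ∀ x, (EData G H rX sX lact ract).s (a x) = x := by
    intro x
    show ract (lact (G.inv (G.unit (rX (y x)))) (y x)) (ς x) = x
    rw [hGinvUnit, heq.equivalence.left_action.unit_act (y x)]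
    exact hς2 x
  -- definition of the section e
  set e : ∀ x, ℋ x := fun x => cast (congrArg ℋ (hsa x)) ((U (a x)).symm (es 0 (y x)))
    with hedef
  have hex : ∀ x, e x = cast (congrArg ℋ (hsa x)) ((U (a x)).symm (es 0 (y x))) := fun _ => rfl
  refine ⟨e, ?_, ?_, ?_⟩
  · -- measurability of the section
    intro i
    have key : (fun x => ⟪e x, es i x⟫_ℂ) = fun x => (starRingEnd ℂ)
        (⟪U (a x) (es i ((EData G H rX sX lact ract).s (a x))),
          es 0 ((EData G H rX sX lact ract).r (a x))⟫_ℂ) := by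
      funext x
      have h1 : es i x = cast (congrArg ℋ (hsa x)) (es i ((EData G H rX sX lact ract).s (a x))) :=
        bundle_apply_cast ℋ (es i) (hsa x)
      rw [hex x, h1, bundle_inner_cast ℋ (hsa x),
        ← LinearIsometryEquiv.inner_map_map (U (a x))]
      erw [LinearIsometryEquiv.apply_symm_apply]
      rw [inner_conj_symm]
      rfl
    rw [key]
    have hconj : Measurable (starRingEnd ℂ) := (RCLike.continuous_conj (K := ℂ)).measurable
    exact hconj.comp ((hU_borel i 0).comp hameas)
  · -- unit vectors
    rintro x ⟨v, hv⟩
    have hvy : ∃ w : ℋ (y x), w ≠ 0 := by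
      refine ⟨U (a x) (cast (congrArg ℋ (hsa x).symm) v), fun h0 => hv ?_⟩
      have hn : ‖v‖ = 0 := by
        rw [← bundle_norm_cast ℋ (hsa x).symm v, ← (U (a x)).norm_map, h0]
        exact norm_zero
      exact norm_eq_zero.1 hn
    have h0 : es 0 (y x) ≠ 0 := hes_first (y x) hvy
    rw [hex x, bundle_norm_cast ℋ (hsa x)]
    erw [LinearIsometryEquiv.norm_map]
    exact hes_unit (y x) 0 h0
  · -- equivariance
    intro x η hη hs
    set b : ArrG × X × ArrH := (G.unit (rX x), x, η) with hbdef
    set z : X := ract x η with hzdef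
    have hrz : rX z = rX x := heq.equivalence.rX_ract x η hη
    have hyz : y z = y x := congrArg c hrz
    have hsς : H.s (ς x) = H.r η := by
      have h1 := heq.equivalence.right_action.moment (y x) (ς x) (hς1 x)
      rw [hς2 x] at h1
      rw [← h1]; exact hη
    have hςz : ς z = H.comp (ς x) η := by
      refine huniq (y z) (ς z) (H.comp (ς x) η) (hς1 z) ?_ ?_
      · rw [hyz, heq.H_groupoid.r_comp (ς x) η hsς]
        exact hς1 x
      · rw [hς2 z, hyz,
          heq.equivalence.right_action.comp_act (y x) (ς x) η (hς1 x) hsς, hς2 x]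
    have hGcomp : G.comp (G.unit (rX x)) (G.unit (rX x)) = G.unit (rX x) := by
      have h := heq.G_groupoid.unit_comp (G.unit (rX x))
      rwa [heq.G_groupoid.r_unit] at h
    have hcomp : (EData G H rX sX lact ract).comp (a x) b = a z := by
      show (G.comp (G.unit (rX (y x))) (G.unit (rX x)), y x, H.comp (ς x) η)
          = (G.unit (rX (y z)), y z, ς z)
      rw [hyz, hyx x, hςz, hGcomp]
    have hcompat : (EData G H rX sX lact ract).s (a x) = (EData G H rX sX lact ract).r b :=
      hsa x
    have hsb : (EData G H rX sX lact ract).s b = z := hs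
    have hs2 : (EData G H rX sX lact ract).s ((EData G H rX sX lact ract).comp (a x) b)
        = (EData G H rX sX lact ract).s b :=
      (congrArg (EData G H rX sX lact ract).s hcomp).trans ((hsa z).trans hsb.symm)
    have hmain := hU_hom (a x) b ⟨heq.G_groupoid.r_unit _, hς1 x⟩
      ⟨heq.G_groupoid.r_unit _, hη⟩ hcompat hs2 ((U b).symm (e x))
    erw [LinearIsometryEquiv.apply_symm_apply] at hmain
    have hx2 : cast (congrArg ℋ hcompat.symm) (e x) = (U (a x)).symm (es 0 (y x)) := by
      rw [hex x]
      erw [cast_cast]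
      rfl
    rw [hx2] at hmain
    erw [LinearIsometryEquiv.apply_symm_apply] at hmain
    have hval : cast (congrArg ℋ hs2.symm) ((U b).symm (e x))
        = (U ((EData G H rX sX lact ract).comp (a x) b)).symm (es 0 (y x)) := by
      rw [← hmain, LinearIsometryEquiv.symm_apply_apply]
    have hval2 : (U b).symm (e x) = cast (congrArg ℋ hs2)
        ((U ((EData G H rX sX lact ract).comp (a x) b)).symm (es 0 (y x))) := by
      have h := congrArg (cast (congrArg ℋ hs2)) hval
      rwa [cast_cast, show cast ((congrArg ℋ hs2.symm).trans (congrArg ℋ hs2))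
        ((U b).symm (e x)) = (U b).symm (e x) from rfl] at h
    rw [hval2, cast_cast]
    have haux : ∀ (p q : ArrG × X × ArrH) (hpq : p = q)
        (w1 : ℋ ((EData G H rX sX lact ract).r p)) (w2 : ℋ ((EData G H rX sX lact ract).r q)),
        HEq w1 w2 → HEq ((U p).symm w1) ((U q).symm w2) := by
      rintro p q rfl w1 w2 h12
      have h13 := eq_of_heq h12
      subst h13
      exact HEq.rfl
    have hes0 : HEq (es 0 (y z)) (es 0 (y x)) := by rw [hyz]
    have hw : HEq ((U (a z)).symm (es 0 (y z)))
        ((U ((EData G H rX sX lact ract).comp (a x) b)).symm (es 0 (y x))) :=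
      haux (a z) _ hcomp.symm (es 0 (y z)) (es 0 (y x)) hes0
    exact cast_eq_cast_of_heq _ _ hw
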